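/- For integers n ≥ m+1 ≥ 1 and any continuously differentiable function f on [-1,1], we have ∫_{-1}^{1} f'(x) T_n^{(m+1)}(x) (1-x^2)^{m+1/2} dx = (n^2 - m^2) ∫_{-1}^{1} f(x) T_n^{(m)}(x) (1-x^2)^{m-1/2} dx. -/

import Mathlib

open Polynomial Polynomial.Chebyshev intervalIntegral

theorem cheb_ode0 (n : ℤ) : (1 - X^2 : ℝ[X]) * derivative (derivative (T ℝ n))
    = X * derivative (T ℝ n) - (n:ℝ[X])^2 * T ℝ n := by
  have h1 := T_derivative_eq_U (R:=ℝ) n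
  have h2 := add_one_mul_T_eq_poly_in_U (R:=ℝ) (n-1)
  have h3 := congr_arg derivative h1
  simp only [derivative_mul, derivative_intCast, zero_mul, zero_add, sub_add_cancel] at h3 h2
  linear_combination (norm := (push_cast; ring_nf)) (1 - (X:ℝ[X])^2) * h3 + (n:ℝ[X]) * h2 - X * h1

theorem cheb_ode (n : ℤ) (m : ℕ) : (1 - X^2 : ℝ[X]) * derivative^[m+2] (T ℝ n)
    = (2*(m:ℝ[X])+1) * X * derivative^[m+1] (T ℝ n)
      - ((n:ℝ[X])^2 - (m:ℝ[X])^2) * derivative^[m] (T ℝ n) := by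
  induction m with
  | zero => simpa using cheb_ode0 n
  | succ m ih =>
    have h := congr_arg derivative ih
    simp only [Function.iterate_succ_apply', derivative_mul, derivative_sub, derivative_one,
      derivative_X_pow, derivative_X, derivative_natCast, derivative_intCast, derivative_add,
      derivative_ofNat, derivative_pow, map_ofNat, C_eq_natCast] at h ⊢
    push_cast at h ⊢
    linear_combination (norm := ring_nf) h

theorem cont_aux {r : ℝ} (hr : 0 < r) : Continuous fun x : ℝ => (1 - x^2) ^ r := by
  rw [continuous_iff_continuousAt]
  intro x
  exact (Real.continuousAt_rpow_const _ _ (Or.inr hr.le)).comp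
    ((continuous_const.sub (continuous_pow 2)).continuousAt)

theorem intB : IntervalIntegrable (fun x : ℝ => (1 - x^2) ^ (-(1/2) : ℝ))
    MeasureTheory.volume (-1) 1 := by
  have meas : Measurable (fun x : ℝ => (1 - x^2) ^ (-(1/2) : ℝ)) := by fun_prop
  have I01 : IntervalIntegrable (fun x : ℝ => (1 - x^2) ^ (-(1/2) : ℝ))
      MeasureTheory.volume 0 1 := by
    have base : IntervalIntegrable (fun x : ℝ => x ^ (-(1/2) : ℝ)) MeasureTheory.volume 0 1 :=
      intervalIntegral.intervalIntegrable_rpow' (by norm_num)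
    have refl : IntervalIntegrable (fun x : ℝ => (1 - x) ^ (-(1/2) : ℝ))
        MeasureTheory.volume 0 1 := by
      simpa using (base.comp_sub_left 1).symm
    refine refl.mono_fun (meas.aestronglyMeasurable) ?_
    rw [Set.uIoc_of_le (by norm_num : (0:ℝ) ≤ 1)]
    filter_upwards [MeasureTheory.ae_restrict_mem measurableSet_Ioc] with x hx
    obtain ⟨hx0, hx1⟩ := hx
    rw [Real.norm_eq_abs, Real.norm_eq_abs, abs_of_nonneg (Real.rpow_nonneg (by nlinarith) _),
      abs_of_nonneg (Real.rpow_nonneg (by linarith) _)]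
    rcases eq_or_lt_of_le hx1 with h1 | h1
    · subst h1
      norm_num
    · exact Real.rpow_le_rpow_of_nonpos (by linarith) (by nlinarith) (by norm_num)
  have Ineg : IntervalIntegrable (fun x : ℝ => (1 - x^2) ^ (-(1/2) : ℝ))
      MeasureTheory.volume (-1) 0 := by
    have := (I01.comp_sub_left 0).symm
    simpa [neg_sq] using this
  exact Ineg.trans I01

theorem intC (m : ℕ) (φ : ℝ → ℝ) (hφ : Continuous φ) :
    IntervalIntegrable (fun x => φ x * (1 - x^2) ^ ((m:ℝ) - 1/2))
      MeasureTheory.volume (-1) 1 := by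
  cases m with
  | zero =>
    have := intB.continuousOn_mul hφ.continuousOn
    simpa [show ((0:ℕ):ℝ) - 1/2 = -(1/2) by norm_num] using this
  | succ k =>
    have hr : (0:ℝ) < ((k+1:ℕ):ℝ) - 1/2 := by
      push_cast
      have : (0:ℝ) ≤ (k:ℝ) := Nat.cast_nonneg k
      linarith
    exact (hφ.mul (cont_aux hr)).intervalIntegrable _ _

theorem keyDeriv (n : ℤ) (m : ℕ) {x : ℝ} (hx1 : -1 < x) (hx2 : x < 1) :
    HasDerivAt (fun y => ((derivative^[m+1] (T ℝ n)).eval y) * (1 - y^2) ^ ((m:ℝ) + 1/2))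
      (-(((n:ℝ))^2 - (m:ℝ)^2) * ((derivative^[m] (T ℝ n)).eval x)
        * (1 - x^2) ^ ((m:ℝ) - 1/2)) x := by
  have hpos : 0 < 1 - x^2 := by nlinarith
  have h1 : HasDerivAt (fun y : ℝ => 1 - y^2) (-(2*x)) x := by
    simpa using (hasDerivAt_pow 2 x).const_sub 1
  have h2 := h1.rpow_const (p := (m:ℝ)+1/2) (Or.inl hpos.ne')
  have h3 := (derivative^[m+1] (T ℝ n)).hasDerivAt x
  have h := h3.mul h2
  rw [← Function.iterate_succ_apply' derivative (m+1)] at h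
  refine h.congr_deriv ?_
  symm
  have he : ((m:ℝ) + 1/2) - 1 = (m:ℝ) - 1/2 := by ring
  have hsplit : (1 - x^2) ^ ((m:ℝ) + 1/2) = (1 - x^2) * (1 - x^2) ^ ((m:ℝ) - 1/2) := by
    rw [show (m:ℝ)+1/2 = 1 + ((m:ℝ)-1/2) by ring, Real.rpow_add hpos, Real.rpow_one]
  have hode := congr_arg (Polynomial.eval x) (cheb_ode n m)
  simp only [Polynomial.eval_mul, Polynomial.eval_sub, Polynomial.eval_add, Polynomial.eval_one,
    Polynomial.eval_pow, Polynomial.eval_X, Polynomial.eval_intCast, Polynomial.eval_natCast,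
    Polynomial.eval_ofNat] at hode
  have hmm : (m+1).succ = m+2 := rfl
  rw [hmm] at h ⊢
  rw [he, hsplit]
  linear_combination (-(1 - x^2) ^ ((m:ℝ) - 1/2)) * hode

theorem stmt_0 (n m : ℕ) (hnm : m + 1 ≤ n) (f : ℝ → ℝ) (hf : ContDiff ℝ 1 f) :
    ∫ x in (-1:ℝ)..1,
        deriv f x * ((derivative^[m+1] (T ℝ n)).eval x) * (1 - x ^ 2) ^ ((m : ℝ) + 1/2)
      = ((n : ℝ) ^ 2 - (m : ℝ) ^ 2) *
        ∫ x in (-1:ℝ)..1,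
          f x * ((derivative^[m] (T ℝ n)).eval x) * (1 - x ^ 2) ^ ((m : ℝ) - 1/2) := by
  set A : ℝ := (n : ℝ) ^ 2 - (m : ℝ) ^ 2 with hA
  set p1 : ℝ[X] := derivative^[m+1] (T ℝ n) with hp1
  set p0 : ℝ[X] := derivative^[m] (T ℝ n) with hp0
  have hc : Continuous (deriv f) := hf.continuous_deriv le_rfl
  have hrpos : (0:ℝ) < (m:ℝ) + 1/2 := by positivity
  set g : ℝ → ℝ := fun x => p1.eval x * (1 - x^2) ^ ((m:ℝ) + 1/2) with hgdef
  have gcont : Continuous g := p1.continuous.mul (cont_aux hrpos)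
  set G2 : ℝ → ℝ := fun x => f x * (-A * p0.eval x * (1 - x^2) ^ ((m:ℝ) - 1/2)) with hG2
  have int1 : IntervalIntegrable (fun x => deriv f x * g x) MeasureTheory.volume (-1) 1 :=
    (hc.mul gcont).intervalIntegrable _ _
  have int2 : IntervalIntegrable G2 MeasureTheory.volume (-1) 1 := by
    have := intC m (fun x => f x * (-A * p0.eval x))
      (hf.continuous.mul (continuous_const.mul p0.continuous))
    have heq : G2 = fun x => (f x * (-A * p0.eval x)) * (1 - x^2) ^ ((m:ℝ) - 1/2) := by
      funext x
      simp only [hG2]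
      ring
    rw [heq]
    exact this
  have hderiv : ∀ x ∈ Set.Ioo (-1:ℝ) 1, HasDerivWithinAt (fun x => f x * g x)
      ((fun x => deriv f x * g x + G2 x) x) (Set.Ioi x) x := by
    intro x hx
    have hd : HasDerivAt f (deriv f x) x :=
      ((hf.differentiable one_ne_zero) x).hasDerivAt
    have hk := keyDeriv (n:ℤ) m hx.1 hx.2
    have hm := hd.mul hk
    refine (HasDerivAt.hasDerivWithinAt ?_)
    exact hm.congr_deriv (by simp only [hG2, hgdef, hA, hp1, hp0, Int.cast_natCast])
  have hFTC := intervalIntegral.integral_eq_sub_of_hasDeriv_right_of_le (a := (-1:ℝ)) (b := 1)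
    (f := fun x => f x * g x) (f' := fun x => deriv f x * g x + G2 x) (by norm_num)
    ((hf.continuous.mul gcont).continuousOn) hderiv (int1.add int2)
  have hg1 : g 1 = 0 := by
    simp only [hgdef]
    norm_num [Real.zero_rpow hrpos.ne']
  have hgm1 : g (-1) = 0 := by
    simp only [hgdef]
    norm_num [Real.zero_rpow hrpos.ne']
  rw [intervalIntegral.integral_add int1 int2, hg1, hgm1] at hFTC
  simp only [mul_zero, sub_zero] at hFTC
  have hL : ∫ x in (-1:ℝ)..1,
      deriv f x * (p1.eval x) * (1 - x ^ 2) ^ ((m : ℝ) + 1/2)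
      = ∫ x in (-1:ℝ)..1, deriv f x * g x := by
    apply intervalIntegral.integral_congr
    intro x _
    simp only [hgdef]
    ring
  have hR : ∫ x in (-1:ℝ)..1, G2 x
      = -A * ∫ x in (-1:ℝ)..1, f x * (p0.eval x) * (1 - x ^ 2) ^ ((m : ℝ) - 1/2) := by
    rw [← intervalIntegral.integral_const_mul]
    apply intervalIntegral.integral_congr
    intro x _
    simp only [hG2]
    ring
  rw [hL]
  rw [hR] at hFTC
  linarith
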